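/- Let R be an integral domain and f a uniquely Euclidean function on R with R not a field, and let x be a nonzero element of R, not a unit, at which f attains its minimum over all elements outside K = R^× ∪ {0}. Then for every a in R, with q, r the unique elements satisfying a = q*x + r and (r = 0 or f(r) < f(x)), the element r lies in K, and if q ≠ 0 then f(q) < f(a). -/

import Mathlib

/-- `f` is a Euclidean function on `R`: for all `a b : R` with `b ≠ 0`, there exist
`q, r` with `a = q * b + r` and (`r = 0` or `f r < f b`). -/
def IsEuclideanFn {R : Type*} [CommRing R] (f : R → ℕ) : Prop :=
  ∀ a b : R, b ≠ 0 → ∃ q r : R, a = q * b + r ∧ (r = 0 ∨ f r < f b)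

/-- `f` is strongly Euclidean: Euclidean, and `f a ≤ f (a * b)` for nonzero `a, b`. -/
def IsStronglyEuclideanFn {R : Type*} [CommRing R] (f : R → ℕ) : Prop :=
  IsEuclideanFn f ∧ ∀ a b : R, a ≠ 0 → b ≠ 0 → f a ≤ f (a * b)

/-- `f` is ultra-Euclidean: Euclidean, and `f (a + b) ≤ max (f a) (f b)` for nonzero
`a, b` with `a + b ≠ 0`. -/
def IsUltraEuclideanFn {R : Type*} [CommRing R] (f : R → ℕ) : Prop :=
  IsEuclideanFn f ∧ ∀ a b : R, a ≠ 0 → b ≠ 0 → a + b ≠ 0 → f (a + b) ≤ max (f a) (f b)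

/-- `f` is uniquely Euclidean: for all `a b : R` with `b ≠ 0`, there is a *unique* pair
`(q, r)` with `a = q * b + r` and (`r = 0` or `f r < f b`). -/
def IsUniquelyEuclideanFn {R : Type*} [CommRing R] (f : R → ℕ) : Prop :=
  ∀ a b : R, b ≠ 0 → ∃! qr : R × R, a = qr.1 * b + qr.2 ∧ (qr.2 = 0 ∨ f qr.2 < f b)

/-- The refinement of `f`: `f̃ a` is the minimum of `f (a * b)` over nonzero `b`. -/
noncomputable def refinement {R : Type*} [CommRing R] (f : R → ℕ) (a : R) : ℕ :=
  sInf {n : ℕ | ∃ b : R, b ≠ 0 ∧ f (a * b) = n}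

section Aux

variable {R : Type*} [CommRing R] [IsDomain R] {f : R → ℕ}

lemma strong_of_unique (hf : IsUniquelyEuclideanFn f) {a b : R} (ha : a ≠ 0) (hb : b ≠ 0) :
    f a ≤ f (a * b) := by
  by_contra h
  push_neg at h
  obtain ⟨qr, _, huniq⟩ := hf (a * b) a ha
  have h1 : ((b, 0) : R × R) = qr := huniq (b, 0) (by simp [mul_comm])
  have h2 : ((0, a * b) : R × R) = qr := huniq (0, a * b) (by simp [h])
  have : b = (0 : R) := by
    have := h1.trans h2.symm
    exact congrArg Prod.fst this
  exact hb this

lemma fneg_ge_of_unique (hf : IsUniquelyEuclideanFn f) {b : R} (hb : b ≠ 0) :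
    f b ≤ f (-b) := by
  by_contra h
  push_neg at h
  obtain ⟨qr, _, huniq⟩ := hf (-b) b hb
  have h1 : ((-1, 0) : R × R) = qr := huniq (-1, 0) (by simp)
  have h2 : ((0, -b) : R × R) = qr := huniq (0, -b) (by simp [h])
  have : (0 : R) = -b := congrArg Prod.snd (h1.trans h2.symm)
  exact hb (by simpa using this.symm)

lemma fneg_of_unique (hf : IsUniquelyEuclideanFn f) {b : R} (hb : b ≠ 0) :
    f (-b) = f b := by
  have h1 := fneg_ge_of_unique hf hb
  have h2 := fneg_ge_of_unique hf (neg_ne_zero.mpr hb)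
  rw [neg_neg] at h2
  exact le_antisymm h2 h1

lemma ultra_of_unique (hf : IsUniquelyEuclideanFn f) {a b : R} (ha : a ≠ 0) (hb : b ≠ 0)
    (hab : a + b ≠ 0) : f (a + b) ≤ max (f a) (f b) := by
  by_contra h
  push_neg at h
  rw [max_lt_iff] at h
  obtain ⟨qr, _, huniq⟩ := hf a (a + b) hab
  have h1 : ((0, a) : R × R) = qr := huniq (0, a) (by simp [h.1])
  have h2 : ((1, -b) : R × R) = qr :=
    huniq (1, -b) ⟨by ring, Or.inr (by rw [fneg_of_unique hf hb]; exact h.2)⟩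
  have : (0 : R) = 1 := congrArg Prod.fst (h1.trans h2.symm)
  exact zero_ne_one this

end Aux

theorem division_by_minimal_nonunit {R : Type*} [CommRing R] [IsDomain R]
    (f : R → ℕ) (hf : IsUniquelyEuclideanFn f) (hR : ¬ IsField R)
    (x : R) (hx : ¬ (IsUnit x ∨ x = 0))
    (hmin : ∀ y : R, ¬ (IsUnit y ∨ y = 0) → f x ≤ f y) :
    ∀ a q r : R, a = q * x + r → (r = 0 ∨ f r < f x) →
      (IsUnit r ∨ r = 0) ∧ (q ≠ 0 → f q < f a) := by
  intro a q r heq hr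
  push_neg at hx
  obtain ⟨hxu, hx0⟩ := hx
  -- Part 1: r is a unit or 0
  have part1 : IsUnit r ∨ r = 0 := by
    rcases hr with h0 | hlt
    · exact Or.inr h0
    · by_contra hcon
      push_neg at hcon
      have := hmin r (by push_neg; exact hcon)
      omega
  refine ⟨part1, fun hq => ?_⟩
  have hqx : q * x ≠ 0 := mul_ne_zero hq hx0
  -- Claim: f q < f (q * x)
  have claimC : f q < f (q * x) := by
    have hle := strong_of_unique hf hq hx0
    rcases lt_or_eq_of_le hle with h | h
    · exact h
    · exfalso
      obtain ⟨⟨s, t⟩, ⟨hst, hrt⟩, _⟩ := hf q (q * x) hqx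
      simp only at hst hrt
      rcases eq_or_ne t 0 with ht0 | ht0
      · rw [ht0, add_zero] at hst
        have : q * (1 - s * x) = 0 := by linear_combination hst
        rcases mul_eq_zero.mp this with h' | h'
        · exact hq h'
        · have hsx : s * x = 1 := (sub_eq_zero.mp h').symm
          exact hxu (IsUnit.of_mul_eq_one (a := x) s (by rw [mul_comm]; exact hsx))
      · have htlt : f t < f (q * x) := hrt.resolve_left ht0
        have ht : t = q * (1 - s * x) := by linear_combination -hst
        have hfac : (1 - s * x) ≠ 0 := by
          intro h0
          rw [ht, h0, mul_zero] at ht0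
          exact ht0 rfl
        have := strong_of_unique hf hq hfac
        rw [← ht] at this
        omega
  -- a ≠ 0
  have ha0 : a ≠ 0 := by
    intro h0
    rw [h0] at heq
    have hrx : r = -(q * x) := by linear_combination -heq
    rcases part1 with hu | h0'
    · rw [hrx] at hu
      have : IsUnit (q * x) := (IsUnit.neg_iff _).mp hu
      exact hxu (isUnit_of_mul_isUnit_right this)
    · rw [h0', add_zero] at heq
      exact hqx heq.symm
  rcases part1 with hu | h0
  · -- r is a unit
    have hr0 : r ≠ 0 := hu.ne_zero
    have hqxeq : q * x = a + (-r) := by linear_combination -heq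
    have hultra : f (q * x) ≤ max (f a) (f (-r)) := by
      rw [hqxeq]
      exact ultra_of_unique hf ha0 (neg_ne_zero.mpr hr0) (by rw [← hqxeq]; exact hqx)
    rw [fneg_of_unique hf hr0] at hultra
    -- f r ≤ f 1 ≤ f q
    obtain ⟨v, hv⟩ := hu.exists_right_inv
    have hv0 : v ≠ 0 := by
      intro h0
      rw [h0, mul_zero] at hv
      exact zero_ne_one hv
    have h1 : f r ≤ f 1 := by
      have := strong_of_unique hf hr0 hv0
      rwa [hv] at this
    have h2 : f 1 ≤ f q := by
      have := strong_of_unique hf (one_ne_zero : (1:R) ≠ 0) hq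
      rwa [one_mul] at this
    have : f r < f (q * x) := by omega
    rcases max_cases (f a) (f r) with ⟨hm, _⟩ | ⟨hm, _⟩ <;> omega
  · rw [h0, add_zero] at heq
    rw [heq]
    exact claimC
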